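/- The function (x,y) ↦ R(t,x,y) is bounded on ℝ² for each t > 0, the quantity m(t) := sup_{x,y ∈ ℝ} |R(t,x,y)| is bounded on (0,∞), and m(t) → 0 as t → 0⁺. -/

import Mathlib

noncomputable section
open MeasureTheory Real Filter

/-- The Mehler kernel `G(t,x,y)`, the integral kernel of `e^{-tH}` for the
harmonic oscillator `H = ½(-d²/dx² + x²)`. -/
def G (t x y : ℝ) : ℝ :=
  (2 * Real.pi * Real.sinh t) ^ (-(1 : ℝ) / 2) *
    Real.exp (-(((x ^ 2 + y ^ 2) * Real.cosh t - 2 * x * y) / (2 * Real.sinh t)))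

/-- The leading error kernel `R(t,x,y)`. -/
def R (t x y : ℝ) : ℝ :=
  G t x y * (t ^ 2 / 12) *
    (t * ((1 / 4) * (Real.exp t + Real.exp (-t)) / (Real.exp t - Real.exp (-t)) +
          ((Real.exp t + Real.exp (-t)) * x * y - (x ^ 2 + y ^ 2)) /
            (Real.exp t - Real.exp (-t)) ^ 2) +
      (1 / 16) * (1 + (4 * x * y - (Real.exp t + Real.exp (-t)) * (x ^ 2 + y ^ 2)) /
            (Real.exp t - Real.exp (-t))))

lemma aux_exp (a : ℝ) (ha : 0 ≤ a) : a * Real.exp (-a) ≤ 1 := by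
  have h := Real.add_one_le_exp a
  have he : 0 < Real.exp a := Real.exp_pos a
  rw [Real.exp_neg, mul_inv_le_iff₀ he]
  linarith

lemma exp_decay (s z E : ℝ) (hs : 0 < s) (hz : 0 ≤ z) (hE : z / (2 * s) ≤ E) :
    Real.exp (-E) * z ≤ 2 * s := by
  have h1 : Real.exp (-E) ≤ Real.exp (-(z / (2 * s))) := Real.exp_le_exp.2 (neg_le_neg hE)
  have h2 := aux_exp (z / (2 * s)) (by positivity)
  have h3 : Real.exp (-E) * z ≤ Real.exp (-(z / (2 * s))) * z :=
    mul_le_mul_of_nonneg_right h1 hz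
  have h4 : Real.exp (-(z / (2 * s))) * z ≤ 2 * s := by
    have := mul_le_mul_of_nonneg_left h2 (by positivity : (0:ℝ) ≤ 2 * s)
    calc Real.exp (-(z / (2 * s))) * z = 2 * s * (z / (2 * s) * Real.exp (-(z / (2 * s)))) := by
          field_simp
      _ ≤ 2 * s * 1 := this
      _ = 2 * s := by ring
  linarith

lemma coth_bound (t : ℝ) (ht : 0 < t) : t * Real.cosh t ≤ (t + 1) * Real.sinh t := by
  have h1 := Real.add_one_le_exp (2 * t)
  have h2 : Real.exp (2 * t) = Real.exp t ^ 2 := by rw [two_mul, Real.exp_add]; ring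
  have hme : Real.exp t * Real.exp (-t) = 1 := by rw [← Real.exp_add]; simp
  rw [Real.cosh_eq, Real.sinh_eq]
  nlinarith [Real.exp_pos (-t), Real.exp_pos t]

set_option maxHeartbeats 1000000 in
lemma R_pointwise (t : ℝ) (ht : 0 < t) (x y : ℝ) :
    |R t x y| ≤ (Real.sqrt (2 * Real.pi * Real.sinh t))⁻¹ * (t ^ 2 / 12) * (t + 2) := by
  set s := Real.sinh t with hs_def
  set c := Real.cosh t with hc_def
  have hs : 0 < s := Real.sinh_pos_iff.2 ht
  have hc1 : 1 < c := by rw [hc_def]; exact Real.one_lt_cosh.2 (ne_of_gt ht)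
  have hts : t ≤ s := le_of_lt (Real.self_lt_sinh_iff.2 ht)
  have hcoth : t * c ≤ (t + 1) * s := coth_bound t ht
  have he1 : Real.exp t - Real.exp (-t) = 2 * s := by rw [hs_def, Real.sinh_eq]; ring
  have he2 : Real.exp t + Real.exp (-t) = 2 * c := by rw [hc_def, Real.cosh_eq]; ring
  set u := x ^ 2 + y ^ 2 with hu_def
  set w := (x - y) ^ 2 with hw_def
  set E : ℝ := (u * c - 2 * x * y) / (2 * s) with hE_def
  set A : ℝ := t * (1 / 4 * (2 * c) / (2 * s) + ((2 * c) * x * y - u) / (2 * s) ^ 2) +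
      1 / 16 * (1 + (4 * x * y - (2 * c) * u) / (2 * s)) with hA_def
  set B : ℝ := 8 * t * s * c + 8 * t * ((2 * c) * (x * y) - u) + 2 * s ^ 2 +
      s * (4 * (x * y) - 2 * c * u) with hB_def
  have hR : R t x y = (2 * Real.pi * s) ^ (-(1:ℝ) / 2) * Real.exp (-E) * (t ^ 2 / 12) * A := by
    simp only [R, G, ← hs_def, ← hc_def, he1, he2, hE_def, hA_def, hu_def]
  have hrpow : (2 * Real.pi * s) ^ (-(1:ℝ) / 2) = (Real.sqrt (2 * Real.pi * s))⁻¹ := by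
    rw [Real.sqrt_eq_rpow, ← Real.rpow_neg (by positivity)]
    norm_num
  clear_value s c u w E A B
  have hwu : 2 * (x * y) ≤ u := by rw [hu_def]; nlinarith [sq_nonneg (x - y)]
  have hY : 0 ≤ (c - 1) * u + w := by
    have : 0 ≤ u := by rw [hu_def]; positivity
    have : 0 ≤ w := by rw [hw_def]; positivity
    nlinarith
  have hE1 : Real.exp (-E) ≤ 1 := by
    apply Real.exp_le_one_iff.2
    have h0 : (0:ℝ) ≤ u * c - 2 * x * y := by
      rw [hu_def]; nlinarith [sq_nonneg (x - y), sq_nonneg x, sq_nonneg y]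
    have : 0 ≤ E := by rw [hE_def]; positivity
    linarith
  have hEw : Real.exp (-E) * w ≤ 2 * s := by
    apply exp_decay s w E hs (by rw [hw_def]; positivity)
    rw [hE_def]
    apply (div_le_div_iff_of_pos_right (show (0:ℝ) < 2*s by positivity)).2
    rw [hw_def, hu_def]; nlinarith [sq_nonneg x, sq_nonneg y]
  have hEu : Real.exp (-E) * ((c - 1) * u) ≤ 2 * s := by
    apply exp_decay s _ E hs (mul_nonneg (by linarith) (by rw [hu_def]; positivity))
    rw [hE_def]
    apply (div_le_div_iff_of_pos_right (show (0:ℝ) < 2*s by positivity)).2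
    linarith [hwu]
  have hub : (2 * c) * (x * y) - u ≤ (c - 1) * u + w := by
    rw [hu_def, hw_def]
    nlinarith [mul_nonneg (by linarith : (0:ℝ) ≤ c + 1) (sq_nonneg (x - y))]
  have hlb : -((c - 1) * u + w) ≤ (2 * c) * (x * y) - u := by
    rw [hu_def, hw_def]
    nlinarith [mul_nonneg (by linarith : (0:ℝ) ≤ c - 1) (sq_nonneg (x + y))]
  have hBle : |B| ≤ 8 * t * s * c + 2 * s ^ 2 + (8 * t + 2 * s) * ((c - 1) * u + w) := by
    have hBw : s * (4 * (x * y) - 2 * c * u) = -(2 * s * ((c - 1) * u + w)) := by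
      rw [hu_def, hw_def]; ring
    rw [hB_def, hBw, abs_le]
    constructor
    · linarith [mul_le_mul_of_nonneg_left hlb (by positivity : (0:ℝ) ≤ 8 * t),
        mul_nonneg (le_of_lt hs) hY, sq_nonneg s,
        mul_nonneg (mul_nonneg (le_of_lt ht) (le_of_lt hs)) (by linarith : (0:ℝ) ≤ c)]
    · linarith [mul_le_mul_of_nonneg_left hub (by positivity : (0:ℝ) ≤ 8 * t),
        mul_nonneg (le_of_lt hs) hY]
  have hfinal : Real.exp (-E) * |B| ≤ 32 * s ^ 2 * (t + 2) := by
    have e0 : (0:ℝ) ≤ Real.exp (-E) := (Real.exp_pos _).le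
    have k6 : Real.exp (-E) * |B| ≤
        Real.exp (-E) * (8 * t * s * c + 2 * s ^ 2 + (8 * t + 2 * s) * ((c - 1) * u + w)) :=
      mul_le_mul_of_nonneg_left hBle e0
    have hbase : (0:ℝ) ≤ 8 * t * s * c + 2 * s ^ 2 := by
      have : (0:ℝ) < c := by linarith
      positivity
    have k5 : Real.exp (-E) * (8 * t * s * c + 2 * s ^ 2) ≤ 8 * t * s * c + 2 * s ^ 2 :=
      mul_le_of_le_one_left hbase hE1
    have k1 : (8 * t) * (Real.exp (-E) * ((c - 1) * u)) ≤ (8 * t) * (2 * s) :=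
      mul_le_mul_of_nonneg_left hEu (by positivity)
    have k2 : (8 * t) * (Real.exp (-E) * w) ≤ (8 * t) * (2 * s) :=
      mul_le_mul_of_nonneg_left hEw (by positivity)
    have k3 : (2 * s) * (Real.exp (-E) * ((c - 1) * u)) ≤ (2 * s) * (2 * s) :=
      mul_le_mul_of_nonneg_left hEu (by positivity)
    have k4 : (2 * s) * (Real.exp (-E) * w) ≤ (2 * s) * (2 * s) :=
      mul_le_mul_of_nonneg_left hEw (by positivity)
    have k7 : (8 * s) * (t * c) ≤ (8 * s) * ((t + 1) * s) :=
      mul_le_mul_of_nonneg_left hcoth (by positivity)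
    have k8 : (32 * s) * t ≤ (32 * s) * s :=
      mul_le_mul_of_nonneg_left hts (by positivity)
    have k9 : (0:ℝ) ≤ t * s ^ 2 := by positivity
    have kexp : Real.exp (-E) * (8 * t * s * c + 2 * s ^ 2 + (8 * t + 2 * s) * ((c - 1) * u + w))
        = Real.exp (-E) * (8 * t * s * c + 2 * s ^ 2)
          + (8 * t) * (Real.exp (-E) * ((c - 1) * u)) + (8 * t) * (Real.exp (-E) * w)
          + (2 * s) * (Real.exp (-E) * ((c - 1) * u)) + (2 * s) * (Real.exp (-E) * w) := by
      ring
    linarith [k6, k5, k1, k2, k3, k4, k7, k8, k9, kexp, sq_nonneg s]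
  have hABeq : A = B / (32 * s ^ 2) := by
    rw [hA_def, hB_def]
    field_simp
    ring
  have hAabs : Real.exp (-E) * |A| ≤ t + 2 := by
    rw [hABeq, abs_div, abs_of_pos (show (0:ℝ) < 32 * s ^ 2 by positivity),
      ← mul_div_assoc, div_le_iff₀ (by positivity : (0:ℝ) < 32 * s ^ 2)]
    linarith [hfinal]
  calc |R t x y| = (Real.sqrt (2 * Real.pi * s))⁻¹ * (t ^ 2 / 12) * (Real.exp (-E) * |A|) := by
        rw [hR, hrpow, abs_mul, abs_mul, abs_mul,
          abs_of_nonneg (inv_nonneg.2 (Real.sqrt_nonneg _)),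
          abs_of_nonneg (Real.exp_pos (-E)).le,
          abs_of_nonneg (by positivity : (0:ℝ) ≤ t ^ 2 / 12)]
        ring
    _ ≤ (Real.sqrt (2 * Real.pi * s))⁻¹ * (t ^ 2 / 12) * (t + 2) :=
        mul_le_mul_of_nonneg_left hAabs (by positivity)


lemma sinh7 (t : ℝ) (ht : 1 ≤ t) : t ^ 7 / 1647086 ≤ Real.sinh t := by
  have h1 : (1 + t / 7) ^ 7 ≤ Real.exp t := by
    have := Real.add_one_le_exp (t / 7)
    calc (1 + t / 7) ^ 7 ≤ Real.exp (t / 7) ^ 7 := by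
          apply pow_le_pow_left₀ (by linarith) (by linarith)
      _ = Real.exp t := by rw [← Real.exp_nat_mul]; congr 1; push_cast; ring
  have h2 : 1 + (t / 7) ^ 7 ≤ (1 + t / 7) ^ 7 := by
    have ha : 0 ≤ t / 7 := by linarith
    nlinarith [pow_nonneg ha 2, pow_nonneg ha 3, pow_nonneg ha 4, pow_nonneg ha 5,
      pow_nonneg ha 6, pow_nonneg ha 7]
  have h3 : Real.exp (-t) ≤ 1 := Real.exp_le_one_iff.2 (by linarith)
  rw [Real.sinh_eq]
  nlinarith [Real.exp_pos t]

lemma M_small (t : ℝ) (ht : 0 < t) (ht1 : t ≤ 1) :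
    (Real.sqrt (2 * Real.pi * Real.sinh t))⁻¹ * (t ^ 2 / 12) * (t + 2) ≤ Real.sqrt t := by
  have hs : 0 < Real.sinh t := Real.sinh_pos_iff.2 ht
  have hts : t ≤ Real.sinh t := (Real.self_lt_sinh_iff.2 ht).le
  have hpi : (3:ℝ) ≤ Real.pi := Real.pi_gt_three.le
  have h4 : 4 * t ≤ 2 * Real.pi * Real.sinh t := by nlinarith
  have hmono : Real.sqrt (4 * t) ≤ Real.sqrt (2 * Real.pi * Real.sinh t) := Real.sqrt_le_sqrt h4
  have h2r : Real.sqrt (4 * t) = 2 * Real.sqrt t := by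
    rw [show (4:ℝ) * t = (2:ℝ) ^ 2 * t by ring, Real.sqrt_mul (by positivity),
      Real.sqrt_sq (by norm_num : (0:ℝ) ≤ 2)]
  set r := Real.sqrt t with hr_def
  have hrpos : 0 < r := Real.sqrt_pos.2 ht
  have hr2 : r ^ 2 = t := Real.sq_sqrt ht.le
  have hinv : (Real.sqrt (2 * Real.pi * Real.sinh t))⁻¹ ≤ (2 * r)⁻¹ :=
    inv_anti₀ (by positivity) (by rw [← h2r]; exact hmono)
  have hstep : (Real.sqrt (2 * Real.pi * Real.sinh t))⁻¹ * (t ^ 2 / 12) * (t + 2) ≤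
      (2 * r)⁻¹ * (t ^ 2 / 12) * (t + 2) := by
    apply mul_le_mul_of_nonneg_right (mul_le_mul_of_nonneg_right hinv (by positivity)) (by linarith)
  have heq : (2 * r)⁻¹ * (t ^ 2 / 12) * (t + 2) = t ^ 2 * (t + 2) / (24 * r) := by
    field_simp; ring
  have hfin : t ^ 2 * (t + 2) / (24 * r) ≤ r := by
    rw [div_le_iff₀ (by positivity)]
    nlinarith [hr2, hrpos]
  linarith

lemma M_big (t : ℝ) (ht1 : 1 ≤ t) :
    (Real.sqrt (2 * Real.pi * Real.sinh t))⁻¹ * (t ^ 2 / 12) * (t + 2) ≤ 400 := by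
  have ht : 0 < t := by linarith
  have hs : 0 < Real.sinh t := Real.sinh_pos_iff.2 ht
  have hs7 := sinh7 t ht1
  have hpi : (3:ℝ) ≤ Real.pi := Real.pi_gt_three.le
  set r := Real.sqrt t with hr_def
  have hrpos : 0 < r := Real.sqrt_pos.2 ht
  have hr2 : r ^ 2 = t := Real.sq_sqrt ht.le
  have hr1 : 1 ≤ r := by
    rw [hr_def, show (1:ℝ) = Real.sqrt 1 by simp]
    exact Real.sqrt_le_sqrt ht1
  set q := t ^ 3 * r / 1284 with hq_def
  have hqpos : 0 < q := by positivity
  have hq2eq : q ^ 2 = t ^ 6 * t / 1648656 := by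
    rw [hq_def, div_pow, mul_pow, hr2, ← pow_mul]; norm_num
  have hq2 : q ^ 2 ≤ 2 * Real.pi * Real.sinh t := by
    rw [hq2eq]
    nlinarith [mul_nonneg (by linarith : (0:ℝ) ≤ Real.pi - 3) hs.le, pow_pos ht 7,
      pow_pos ht 6]
  have hq : q ≤ Real.sqrt (2 * Real.pi * Real.sinh t) := by
    rw [show q = Real.sqrt (q ^ 2) from (Real.sqrt_sq hqpos.le).symm]
    exact Real.sqrt_le_sqrt hq2
  have hinv : (Real.sqrt (2 * Real.pi * Real.sinh t))⁻¹ ≤ q⁻¹ := inv_anti₀ hqpos hq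
  have hstep : (Real.sqrt (2 * Real.pi * Real.sinh t))⁻¹ * (t ^ 2 / 12) * (t + 2) ≤
      q⁻¹ * (t ^ 2 / 12) * (t + 2) := by
    apply mul_le_mul_of_nonneg_right (mul_le_mul_of_nonneg_right hinv (by positivity)) (by linarith)
  have heq : q⁻¹ * (t ^ 2 / 12) * (t + 2) = 1284 * t ^ 2 * (t + 2) / (12 * (t ^ 3 * r)) := by
    rw [hq_def]; field_simp
  have hfin : 1284 * t ^ 2 * (t + 2) / (12 * (t ^ 3 * r)) ≤ 400 := by
    rw [div_le_iff₀ (by positivity)]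
    nlinarith [mul_nonneg (by linarith : (0:ℝ) ≤ r - 1) (pow_nonneg ht.le 3),
      mul_nonneg (by linarith : (0:ℝ) ≤ t - 1) (sq_nonneg t), sq_nonneg t, pow_pos ht 3]
  linarith


/-- `R(t,·,·)` is bounded for each `t > 0`, `m(t) = sup_{x,y} |R(t,x,y)|` is
bounded on `(0,∞)`, and `m(t) → 0` as `t → 0⁺`. -/
theorem R_bounded_and_small_time :
    (∀ t : ℝ, 0 < t → ∃ C : ℝ, ∀ x y : ℝ, |R t x y| ≤ C) ∧
    (∃ C : ℝ, ∀ t : ℝ, 0 < t → (⨆ p : ℝ × ℝ, |R t p.1 p.2|) ≤ C) ∧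
    Tendsto (fun t : ℝ => ⨆ p : ℝ × ℝ, |R t p.1 p.2|) (nhdsWithin 0 (Set.Ioi 0)) (nhds 0) := by
  have hsup : ∀ t : ℝ, 0 < t → (⨆ p : ℝ × ℝ, |R t p.1 p.2|) ≤
      (Real.sqrt (2 * Real.pi * Real.sinh t))⁻¹ * (t ^ 2 / 12) * (t + 2) := fun t ht =>
    Real.iSup_le (fun p => R_pointwise t ht p.1 p.2)
      (le_trans (abs_nonneg _) (R_pointwise t ht 0 0))
  have hsup0 : ∀ t : ℝ, 0 ≤ ⨆ p : ℝ × ℝ, |R t p.1 p.2| := fun t =>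
    Real.iSup_nonneg fun p => abs_nonneg _
  refine ⟨fun t ht => ⟨_, fun x y => R_pointwise t ht x y⟩, ⟨400, fun t ht => ?_⟩, ?_⟩
  · rcases le_or_gt t 1 with h1 | h1
    · have h0 := le_trans (hsup t ht) (M_small t ht h1)
      have h2 : Real.sqrt t ≤ 1 := Real.sqrt_le_one.2 h1
      linarith
    · exact le_trans (hsup t ht) (M_big t h1.le)
  · apply tendsto_of_tendsto_of_tendsto_of_le_of_le' (g := fun _ : ℝ => (0:ℝ))
      (h := fun t : ℝ => Real.sqrt t) tendsto_const_nhds ?_ ?_ ?_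
    · have h := Real.continuous_sqrt.tendsto 0
      rw [Real.sqrt_zero] at h
      exact h.mono_left nhdsWithin_le_nhds
    · exact Filter.Eventually.of_forall fun t => hsup0 t
    · have h1 : ∀ᶠ t in nhdsWithin (0:ℝ) (Set.Ioi 0), t < 1 :=
        eventually_nhdsWithin_of_eventually_nhds (eventually_lt_nhds (by norm_num))
      filter_upwards [self_mem_nhdsWithin, h1] with t ht hlt
      exact le_trans (hsup t ht) (M_small t ht hlt.le)
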